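/- Let G be a finite abelian group and n = n(G) the maximal length of a sequence of elements of G with no nonempty subsequence whose product is the identity. Let r > t > n be integers. Then any sequence of r elements of G contains at least C(r,t)/C(r,n) distinct (as index sets) nonempty subsequences of length at most t and at least t - n whose product of terms is the identity. -/

import Mathlib

private lemma choose_diag_le (a b : ℕ) (h : b ≤ a) :
    ∀ m : ℕ, (a - m).choose (b - m) ≤ a.choose b := by
  intro m
  induction m with
  | zero => simp
  | succ m ih =>
    rcases le_or_gt b m with hbm | hbm
    · have : b - (m + 1) = 0 := by omega
      rw [this, Nat.choose_zero_right]
      exact Nat.one_le_iff_ne_zero.mpr (Nat.choose_pos h).ne'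
    · have h1 : a - m = (a - (m + 1)) + 1 := by omega
      have h2 : b - m = (b - (m + 1)) + 1 := by omega
      refine le_trans ?_ ih
      rw [h1, h2, Nat.choose_succ_succ]
      exact Nat.le_add_right _ _

theorem stmt_5 {G : Type*} [CommGroup G] [Fintype G] [DecidableEq G] (n t r : ℕ)
    (hn_max : ∀ l : List G, (∀ s ∈ l.sublists, s ≠ [] → s.prod ≠ 1) → l.length ≤ n)
    (hn_ex : ∃ l : List G, (∀ s ∈ l.sublists, s ≠ [] → s.prod ≠ 1) ∧ l.length = n)
    (hnt : n < t) (htr : t < r) (f : Fin r → G) :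
    ((r.choose t : ℝ) / (r.choose n : ℝ)) ≤
      ((Finset.univ.filter (fun S : Finset (Fin r) =>
          S.Nonempty ∧ t - n ≤ S.card ∧ S.card ≤ t ∧ ∏ i ∈ S, f i = 1)).card : ℝ) := by
  classical
  -- Step 1: every t-subset T contains a good subset S.
  have hA : ∀ T : Finset (Fin r), T.card = t →
      ∃ S : Finset (Fin r), S ⊆ T ∧ S.Nonempty ∧ t - n ≤ S.card ∧ S.card ≤ t ∧
        ∏ i ∈ S, f i = 1 := by
    intro T hT
    set C : Finset (Finset (Fin r)) :=
      T.powerset.filter (fun S => ∏ i ∈ S, f i = 1) with hC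
    have hCne : C.Nonempty := ⟨∅, by simp [hC]⟩
    obtain ⟨S, hSC, hSmax⟩ := C.exists_max_image Finset.card hCne
    have hST : S ⊆ T := Finset.mem_powerset.mp (Finset.mem_filter.mp hSC).1
    have hSprod : ∏ i ∈ S, f i = 1 := (Finset.mem_filter.mp hSC).2
    -- no nonempty zero-sum subset of T \ S
    have hkey : ∀ U : Finset (Fin r), U ⊆ T \ S → U.Nonempty →
        ∏ i ∈ U, f i ≠ 1 := by
      intro U hU hUne hUprod
      have hdisj : Disjoint S U := by
        refine Finset.disjoint_left.mpr fun a haS haU => ?_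
        exact (Finset.mem_sdiff.mp (hU haU)).2 haS
      have hmem : S ∪ U ∈ C := by
        refine Finset.mem_filter.mpr ⟨Finset.mem_powerset.mpr ?_, ?_⟩
        · exact Finset.union_subset hST (hU.trans Finset.sdiff_subset)
        · rw [Finset.prod_union hdisj, hSprod, hUprod, one_mul]
      have := hSmax _ hmem
      rw [Finset.card_union_of_disjoint hdisj] at this
      have := hUne.card_pos
      omega
    -- apply hn_max to the list of T \ S
    have hlen : (T \ S).card ≤ n := by
      have hnodup : (T \ S).toList.Nodup := Finset.nodup_toList _
      have := hn_max ((T \ S).toList.map f) ?_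
      · simpa using this
      · intro s hs hsne
        rw [List.mem_sublists] at hs
        obtain ⟨u, hu, rfl⟩ := List.sublist_map_iff.mp hs
        intro hprod
        have hund : u.Nodup := hu.nodup hnodup
        have husub : u.toFinset ⊆ T \ S := by
          intro a ha
          rw [List.mem_toFinset] at ha
          exact Finset.mem_toList.mp (hu.subset ha)
        have hune : u.toFinset.Nonempty := by
          rcases u with _ | ⟨a, u⟩
          · simp at hsne
          · exact ⟨a, by simp⟩
        refine hkey u.toFinset husub hune ?_
        rw [List.prod_toFinset f hund]
        exact hprod
    have hsd : (T \ S).card = t - S.card := by rw [Finset.card_sdiff_of_subset hST, hT]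
    have hSle : S.card ≤ t := le_trans (Finset.card_le_card hST) hT.le
    refine ⟨S, hST, ?_, ?_, ?_, hSprod⟩
    · rw [← Finset.card_pos]
      omega
    · omega
    · exact le_trans (Finset.card_le_card hST) (le_of_eq hT)
  -- Step 2: double counting
  set B : Finset (Finset (Fin r)) :=
    Finset.univ.filter (fun S : Finset (Fin r) =>
      S.Nonempty ∧ t - n ≤ S.card ∧ S.card ≤ t ∧ ∏ i ∈ S, f i = 1) with hB
  set A : Finset (Finset (Fin r)) :=
    (Finset.univ : Finset (Fin r)).powersetCard t with hAdef
  have hcardA : A.card = r.choose t := by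
    rw [hAdef, Finset.card_powersetCard, Finset.card_univ, Fintype.card_fin]
  -- the choice function
  let g : Finset (Fin r) → Finset (Fin r) := fun T =>
    if h : T.card = t then (hA T h).choose else ∅
  have hg : ∀ T : Finset (Fin r), T.card = t →
      g T ⊆ T ∧ (g T).Nonempty ∧ t - n ≤ (g T).card ∧ (g T).card ≤ t ∧
        ∏ i ∈ g T, f i = 1 := by
    intro T h
    simp only [g, dif_pos h]
    exact (hA T h).choose_spec
  have hmaps : ∀ T ∈ A, g T ∈ B := by
    intro T hT
    have hTc : T.card = t := (Finset.mem_powersetCard.mp hT).2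
    obtain ⟨_, h2, h3, h4, h5⟩ := hg T hTc
    exact Finset.mem_filter.mpr ⟨Finset.mem_univ _, h2, h3, h4, h5⟩
  have hfiber : ∀ S ∈ B, (A.filter (fun T => g T = S)).card ≤ r.choose n := by
    intro S hSB
    obtain ⟨-, -, hS1, hS2, -⟩ := Finset.mem_filter.mp hSB
    -- inject the fiber into powersetCard (t - S.card) (univ \ S)
    have hinj : (A.filter (fun T => g T = S)).card ≤
        ((Finset.univ \ S).powersetCard (t - S.card)).card := by
      apply Finset.card_le_card_of_injOn (fun T => T \ S)
      · intro T hT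
        obtain ⟨hTA, hTg⟩ := Finset.mem_filter.mp hT
        have hTc : T.card = t := (Finset.mem_powersetCard.mp hTA).2
        have hST : S ⊆ T := hTg ▸ (hg T hTc).1
        refine Finset.mem_powersetCard.mpr ⟨?_, ?_⟩
        · exact Finset.sdiff_subset_sdiff (Finset.subset_univ _) le_rfl
        · rw [Finset.card_sdiff_of_subset hST, hTc]
      · intro T1 hT1 T2 hT2 heq
        obtain ⟨hT1A, hT1g⟩ := Finset.mem_filter.mp (Finset.mem_coe.mp hT1)
        obtain ⟨hT2A, hT2g⟩ := Finset.mem_filter.mp (Finset.mem_coe.mp hT2)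
        have h1c : T1.card = t := (Finset.mem_powersetCard.mp hT1A).2
        have h2c : T2.card = t := (Finset.mem_powersetCard.mp hT2A).2
        have hS1' : S ⊆ T1 := hT1g ▸ (hg T1 h1c).1
        have hS2' : S ⊆ T2 := hT2g ▸ (hg T2 h2c).1
        have heq' : T1 \ S = T2 \ S := heq
        calc T1 = T1 \ S ∪ S := by rw [Finset.sdiff_union_of_subset hS1']
          _ = T2 \ S ∪ S := by rw [heq']
          _ = T2 := Finset.sdiff_union_of_subset hS2'
    have hcard2 : ((Finset.univ \ S).powersetCard (t - S.card)).card =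
        (r - S.card).choose (t - S.card) := by
      rw [Finset.card_powersetCard, Finset.card_sdiff_of_subset (Finset.subset_univ _),
        Finset.card_univ, Fintype.card_fin]
    refine hinj.trans ?_
    rw [hcard2]
    -- (r - s).choose (t - s) ≤ r.choose n  when  t - n ≤ s ≤ t < r
    set s := S.card with hs
    have hst : s ≤ t := hS2
    have htns : t - n ≤ s := hS1
    have h1 : r - s = (r - t + n) - (s - (t - n)) := by omega
    have h2 : t - s = n - (s - (t - n)) := by omega
    rw [h1, h2]
    refine le_trans (choose_diag_le (r - t + n) n (by omega) _) ?_
    exact Nat.choose_le_choose n (by omega)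
  have hcount : r.choose t ≤ r.choose n * B.card := by
    rw [← hcardA]
    exact Finset.card_le_mul_card_image_of_maps_to hmaps _ hfiber
  -- Step 3: convert to reals
  have hpos : (0 : ℝ) < (r.choose n : ℝ) := by
    exact_mod_cast Nat.choose_pos (by omega : n ≤ r)
  rw [div_le_iff₀ hpos]
  calc (r.choose t : ℝ) ≤ ((r.choose n * B.card : ℕ) : ℝ) := by exact_mod_cast hcount
    _ = (B.card : ℝ) * (r.choose n : ℝ) := by push_cast; ring
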